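/- For v ∈ R^3 with 0 < |v| < 1 and W₁, W₂: R^3 → R with |W_i(x)| ≤ C⟨x⟩^{−1}, the interaction term a(x,t) = 20W₁³(x)W₂(x−vt) + 30W₁²(x)W₂²(x−vt) + 20W₁(x)W₂³(x−vt) satisfies ‖a‖_{L^{5/4}_t([t₀,∞); L^{5/2}_x(R^3))} → 0 as t₀ → ∞; in particular a ∈ L^{5/4}_t L^{5/2}_x on [T,∞) for every sufficiently large T. -/

import Mathlib

open MeasureTheory

noncomputable section

abbrev E3 := EuclideanSpace ℝ (Fin 3)

def jb (y : E3) : ℝ := Real.sqrt (1 + ‖y‖ ^ 2)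

/-- The interaction coefficient
`a(x,t) = 20W₁³(x)W₂(x−vt) + 30W₁²(x)W₂²(x−vt) + 20W₁(x)W₂³(x−vt)`. -/
def acoef (v : E3) (W₁ W₂ : E3 → ℝ) (x : E3) (t : ℝ) : ℝ :=
  20 * W₁ x ^ 3 * W₂ (x - t • v) + 30 * W₁ x ^ 2 * W₂ (x - t • v) ^ 2
    + 20 * W₁ x * W₂ (x - t • v) ^ 3

/-- The mixed norm `‖a‖_{L^{5/4}_t([t₀,∞);L^{5/2}_x)}`, in `ℝ≥0∞`. -/
def mixedNorm (v : E3) (W₁ W₂ : E3 → ℝ) (t₀ : ℝ) : ENNReal :=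
  (∫⁻ t in Set.Ici t₀,
      ((∫⁻ x : E3, (‖acoef v W₁ W₂ x t‖₊ : ENNReal) ^ ((5 : ℝ) / 2)) ^ ((2 : ℝ) / 5))
        ^ ((5 : ℝ) / 4)) ^ ((4 : ℝ) / 5)

lemma jb_pos (y : E3) : 0 < jb y := Real.sqrt_pos.2 (by positivity)

lemma one_le_jb (y : E3) : 1 ≤ jb y := by
  rw [show (1:ℝ) = Real.sqrt 1 from (Real.sqrt_one).symm]
  exact Real.sqrt_le_sqrt (by nlinarith [sq_nonneg ‖y‖])

lemma norm_le_jb (y : E3) : ‖y‖ ≤ jb y := by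
  have : ‖y‖ = Real.sqrt (‖y‖ ^ 2) := by
    rw [Real.sqrt_sq (norm_nonneg y)]
  rw [this]
  exact Real.sqrt_le_sqrt (by nlinarith)

lemma jb_neg (y : E3) : jb (-y) = jb y := by simp [jb]

lemma jb_add_le (x y : E3) : jb (x + y) ≤ Real.sqrt 2 * (jb x * jb y) := by
  have hxy : ‖x + y‖ ≤ ‖x‖ + ‖y‖ := norm_add_le x y
  have h1 : (1:ℝ) + ‖x + y‖ ^ 2 ≤ 2 * ((1 + ‖x‖ ^ 2) * (1 + ‖y‖ ^ 2)) := by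
    have h2 : ‖x + y‖ ^ 2 ≤ (‖x‖ + ‖y‖) ^ 2 :=
      pow_le_pow_left₀ (norm_nonneg _) hxy 2
    nlinarith [sq_nonneg (‖x‖ - ‖y‖), sq_nonneg (‖x‖ * ‖y‖)]
  calc jb (x + y) ≤ Real.sqrt (2 * ((1 + ‖x‖ ^ 2) * (1 + ‖y‖ ^ 2))) :=
        Real.sqrt_le_sqrt h1
    _ = Real.sqrt 2 * (jb x * jb y) := by
        rw [Real.sqrt_mul (by norm_num), Real.sqrt_mul (by positivity)]
        rfl

lemma jb_inv_le (y : E3) : (jb y)⁻¹ ≤ 2 * (1 + ‖y‖)⁻¹ := by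
  have h1 : 1 + ‖y‖ ≤ 2 * jb y := by
    have := one_le_jb y; have := norm_le_jb y; linarith
  have h2 : 0 < 1 + ‖y‖ := by positivity
  rw [inv_eq_one_div, show (2:ℝ) * (1 + ‖y‖)⁻¹ = 2 / (1 + ‖y‖) by rw [div_eq_mul_inv],
    div_le_div_iff₀ (jb_pos y) h2]
  linarith

lemma jb_inv_nonneg (y : E3) : 0 ≤ (jb y)⁻¹ := (inv_pos.2 (jb_pos y)).le

lemma jb_continuous : Continuous jb :=
  (continuous_const.add ((continuous_norm).pow 2)).sqrt

set_option maxHeartbeats 2000000 in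
/-- The interaction coefficient `a` is perturbative for large times:
`‖a‖_{L^{5/4}_t([t₀,∞);L^{5/2}_x)} → 0` as `t₀ → ∞`; in particular it is finite on
`[T,∞)` for all large `T`. -/
theorem stmt17 (v : E3) (hv0 : 0 < ‖v‖) (hv1 : ‖v‖ < 1)
    (W₁ W₂ : E3 → ℝ) (hW₁m : Measurable W₁) (hW₂m : Measurable W₂) (C : ℝ)
    (hW₁ : ∀ x : E3, |W₁ x| ≤ C * (jb x)⁻¹) (hW₂ : ∀ x : E3, |W₂ x| ≤ C * (jb x)⁻¹) :
    (∃ T : ℝ, ∀ t₀ : ℝ, T ≤ t₀ → mixedNorm v W₁ W₂ t₀ < ⊤) ∧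
    Filter.Tendsto (fun t₀ => mixedNorm v W₁ W₂ t₀) Filter.atTop (nhds 0) := by
  classical
  set c : ℝ := max C 1 with hc_def
  have hc1 : (1:ℝ) ≤ c := le_max_right C 1
  have hc0 : (0:ℝ) < c := lt_of_lt_of_le one_pos hc1
  set K : ℝ := 70 * Real.sqrt 2 * c ^ 4 with hK_def
  have hK0 : 0 < K := by
    have : (0:ℝ) < Real.sqrt 2 := Real.sqrt_pos.2 (by norm_num)
    positivity
  set m : ℝ := min 1 ‖v‖ with hm_def
  have hm0 : 0 < m := lt_min one_pos hv0
  set R : ℝ := (K * (2 / m)) ^ ((5:ℝ)/4) with hR_def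
  have hR0 : 0 ≤ R := Real.rpow_nonneg (by positivity) _
  -- pointwise bound on `acoef`
  have hmain : ∀ (x : E3) (t : ℝ), |acoef v W₁ W₂ x t| ≤
      K * (jb (t • v))⁻¹ * (max (jb x)⁻¹ (jb (x - t • v))⁻¹) ^ 2 := by
    intro x t
    set y : E3 := x - t • v with hy_def
    set A : ℝ := (jb x)⁻¹ with hA_def
    set B : ℝ := (jb y)⁻¹ with hB_def
    set D : ℝ := (jb (t • v))⁻¹ with hD_def
    have hA0 : 0 < A := inv_pos.2 (jb_pos x)
    have hB0 : 0 < B := inv_pos.2 (jb_pos y)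
    have hD0 : 0 < D := inv_pos.2 (jb_pos _)
    set M : ℝ := max A B with hM_def
    have hM0 : 0 ≤ M := le_trans hA0.le (le_max_left A B)
    have hAM : A ≤ M := le_max_left A B
    have hBM : B ≤ M := le_max_right A B
    have hW1x : |W₁ x| ≤ c * A :=
      (hW₁ x).trans (mul_le_mul_of_nonneg_right (le_max_left C 1) hA0.le)
    have hW2y : |W₂ y| ≤ c * B :=
      (hW₂ y).trans (mul_le_mul_of_nonneg_right (le_max_left C 1) hB0.le)
    have hABD : A * B ≤ Real.sqrt 2 * D := by
      have h3 : jb (t • v) ≤ Real.sqrt 2 * (jb x * jb y) := by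
        have : t • v = x + (t • v - x) := by abel
        rw [this]
        have h4 : jb (t • v - x) = jb y := by
          rw [show t • v - x = -(x - t • v) by abel, jb_neg]
        calc jb (x + (t • v - x)) ≤ Real.sqrt 2 * (jb x * jb (t • v - x)) :=
              jb_add_le x (t • v - x)
          _ = Real.sqrt 2 * (jb x * jb y) := by rw [h4]
      have hp : 0 < jb x * jb y := mul_pos (jb_pos x) (jb_pos y)
      have hq : 0 < jb (t • v) := jb_pos _
      have h5 : (1:ℝ) / (jb x * jb y) ≤ Real.sqrt 2 / jb (t • v) := by
        rw [div_le_div_iff₀ hp hq]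
        nlinarith
      calc A * B = 1 / (jb x * jb y) := by
            rw [hA_def, hB_def, one_div, mul_inv]
        _ ≤ Real.sqrt 2 / jb (t • v) := h5
        _ = Real.sqrt 2 * D := by rw [div_eq_mul_inv]
    have h70 : 20 * A ^ 2 + 30 * (A * B) + 20 * B ^ 2 ≤ 70 * M ^ 2 := by
      nlinarith [mul_le_mul hAM hAM hA0.le hM0, mul_le_mul hBM hBM hB0.le hM0,
        mul_le_mul hAM hBM hB0.le hM0]
    calc |acoef v W₁ W₂ x t|
        ≤ 20 * |W₁ x| ^ 3 * |W₂ y| + 30 * |W₁ x| ^ 2 * |W₂ y| ^ 2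
            + 20 * |W₁ x| * |W₂ y| ^ 3 := by
          have h := abs_add_three (20 * W₁ x ^ 3 * W₂ y) (30 * W₁ x ^ 2 * W₂ y ^ 2)
            (20 * W₁ x * W₂ y ^ 3)
          simpa [acoef, ← hy_def, abs_mul, abs_pow] using h
      _ ≤ 20 * (c * A) ^ 3 * (c * B) + 30 * (c * A) ^ 2 * (c * B) ^ 2
            + 20 * (c * A) * (c * B) ^ 3 := by
          gcongr <;> first | exact hW1x | exact hW2y | positivity
      _ = c ^ 4 * (A * B) * (20 * A ^ 2 + 30 * (A * B) + 20 * B ^ 2) := by ring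
      _ ≤ c ^ 4 * (Real.sqrt 2 * D) * (70 * M ^ 2) := by
          apply mul_le_mul
          · exact mul_le_mul_of_nonneg_left hABD (by positivity)
          · exact h70
          · positivity
          · positivity
      _ = K * D * M ^ 2 := by rw [hK_def]; ring
  -- pointwise bound in ℝ≥0∞
  have hpt : ∀ (t : ℝ) (x : E3),
      (‖acoef v W₁ W₂ x t‖₊ : ENNReal) ^ ((5:ℝ)/2) ≤
        ENNReal.ofReal ((K * (jb (t • v))⁻¹) ^ ((5:ℝ)/2) *
          ((jb x)⁻¹ ^ 5 + (jb (x - t • v))⁻¹ ^ 5)) := by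
    intro t x
    set A : ℝ := (jb x)⁻¹ with hA_def
    set B : ℝ := (jb (x - t • v))⁻¹ with hB_def
    set D : ℝ := (jb (t • v))⁻¹ with hD_def
    have hA0 : 0 < A := inv_pos.2 (jb_pos x)
    have hB0 : 0 < B := inv_pos.2 (jb_pos _)
    have hD0 : 0 < D := inv_pos.2 (jb_pos _)
    set M : ℝ := max A B with hM_def
    have hM0 : 0 ≤ M := le_trans hA0.le (le_max_left A B)
    rw [← enorm_eq_nnnorm, ← ofReal_norm, Real.norm_eq_abs,
      ENNReal.ofReal_rpow_of_nonneg (abs_nonneg _) (by norm_num)]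
    apply ENNReal.ofReal_le_ofReal
    have hM2 : (M ^ 2) ^ ((5:ℝ)/2) = M ^ 5 := by
      rw [← Real.rpow_natCast M 2, ← Real.rpow_mul hM0]
      norm_num
    have hM5 : M ^ 5 ≤ A ^ 5 + B ^ 5 := by
      rcases max_choice A B with h | h <;> rw [hM_def, h]
      · linarith [pow_nonneg hB0.le 5]
      · linarith [pow_nonneg hA0.le 5]
    calc |acoef v W₁ W₂ x t| ^ ((5:ℝ)/2)
        ≤ (K * D * M ^ 2) ^ ((5:ℝ)/2) :=
          Real.rpow_le_rpow (abs_nonneg _) (hmain x t) (by norm_num)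
      _ = (K * D) ^ ((5:ℝ)/2) * (M ^ 2) ^ ((5:ℝ)/2) :=
          Real.mul_rpow (by positivity) (by positivity)
      _ = (K * D) ^ ((5:ℝ)/2) * M ^ 5 := by rw [hM2]
      _ ≤ (K * D) ^ ((5:ℝ)/2) * (A ^ 5 + B ^ 5) :=
          mul_le_mul_of_nonneg_left hM5 (Real.rpow_nonneg (by positivity) _)
  -- the spatial integral of the bound
  set I : ENNReal := ∫⁻ x : E3, ENNReal.ofReal ((jb x)⁻¹ ^ 5) with hI_def
  have hImeas : Measurable (fun x : E3 => ENNReal.ofReal ((jb x)⁻¹ ^ 5)) := by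
    have : Continuous fun x : E3 => ENNReal.ofReal ((jb x)⁻¹ ^ 5) :=
      ENNReal.continuous_ofReal.comp
        ((jb_continuous.inv₀ (fun y => (jb_pos y).ne')).pow 5)
    exact this.measurable
  have hI : I < ⊤ := by
    have hint : Integrable (fun x : E3 => ((1:ℝ) + ‖x‖ ^ 2) ^ (-(5:ℝ) / 2)) :=
      integrable_rpow_neg_one_add_norm_sq (by simp; norm_num)
    have heq : ∀ x : E3, (jb x)⁻¹ ^ 5 = ((1:ℝ) + ‖x‖ ^ 2) ^ (-(5:ℝ) / 2) := by
      intro x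
      have h0 : (0:ℝ) ≤ 1 + ‖x‖ ^ 2 := by positivity
      rw [jb, Real.sqrt_eq_rpow, ← Real.rpow_natCast (((1:ℝ) + ‖x‖ ^ 2) ^ ((1:ℝ)/2))⁻¹ 5,
        Real.inv_rpow (Real.rpow_nonneg h0 _), ← Real.rpow_mul h0, ← Real.rpow_neg h0]
      norm_num
    calc I = ∫⁻ x : E3, ENNReal.ofReal (((1:ℝ) + ‖x‖ ^ 2) ^ (-(5:ℝ) / 2)) :=
          lintegral_congr fun x => by rw [heq]
      _ < ⊤ := hint.lintegral_lt_top
  -- bound for the spatial integral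
  have hF : ∀ t : ℝ,
      (∫⁻ x : E3, (‖acoef v W₁ W₂ x t‖₊ : ENNReal) ^ ((5:ℝ)/2)) ≤
        ENNReal.ofReal ((K * (jb (t • v))⁻¹) ^ ((5:ℝ)/2)) * (I + I) := by
    intro t
    calc (∫⁻ x : E3, (‖acoef v W₁ W₂ x t‖₊ : ENNReal) ^ ((5:ℝ)/2))
        ≤ ∫⁻ x : E3, ENNReal.ofReal ((K * (jb (t • v))⁻¹) ^ ((5:ℝ)/2)) *
            ENNReal.ofReal ((jb x)⁻¹ ^ 5 + (jb (x - t • v))⁻¹ ^ 5) := by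
          apply lintegral_mono
          intro x
          dsimp only
          rw [← ENNReal.ofReal_mul
            (Real.rpow_nonneg (mul_nonneg hK0.le (jb_inv_nonneg _)) _)]
          exact hpt t x
      _ = ENNReal.ofReal ((K * (jb (t • v))⁻¹) ^ ((5:ℝ)/2)) *
            ∫⁻ x : E3, ENNReal.ofReal ((jb x)⁻¹ ^ 5 + (jb (x - t • v))⁻¹ ^ 5) :=
          lintegral_const_mul' _ _ ENNReal.ofReal_ne_top
      _ = ENNReal.ofReal ((K * (jb (t • v))⁻¹) ^ ((5:ℝ)/2)) * (I + I) := by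
          congr 1
          calc (∫⁻ x : E3, ENNReal.ofReal ((jb x)⁻¹ ^ 5 + (jb (x - t • v))⁻¹ ^ 5))
              = ∫⁻ x : E3, (ENNReal.ofReal ((jb x)⁻¹ ^ 5)
                  + ENNReal.ofReal ((jb (x - t • v))⁻¹ ^ 5)) :=
                lintegral_congr fun x => ENNReal.ofReal_add
                  (pow_nonneg (jb_inv_nonneg _) 5) (pow_nonneg (jb_inv_nonneg _) 5)
            _ = I + ∫⁻ x : E3, ENNReal.ofReal ((jb (x - t • v))⁻¹ ^ 5) :=
                lintegral_add_left hImeas _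
            _ = I + I := by
                rw [lintegral_sub_right_eq_self
                  (fun y : E3 => ENNReal.ofReal ((jb y)⁻¹ ^ 5)) (t • v)]
  set S : ENNReal := ENNReal.ofReal R * (I + I) ^ ((1:ℝ)/2) with hS_def
  have hSne : S ≠ ⊤ := by
    apply ENNReal.mul_ne_top ENNReal.ofReal_ne_top
    exact ENNReal.rpow_ne_top_of_nonneg (by norm_num)
      (by simp [ENNReal.add_eq_top, hI.ne])
  set φ : ℝ → ENNReal := fun t => ENNReal.ofReal (((1 + |t|)⁻¹) ^ ((5:ℝ)/4)) with hφ_def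
  have hGt : ∀ t : ℝ,
      ((∫⁻ x : E3, (‖acoef v W₁ W₂ x t‖₊ : ENNReal) ^ ((5:ℝ)/2)) ^ ((2:ℝ)/5)) ^ ((5:ℝ)/4)
        ≤ S * φ t := by
    intro t
    have habs : (0:ℝ) < 1 + |t| := by positivity
    have hDD : (jb (t • v))⁻¹ ≤ 2 / m * (1 + |t|)⁻¹ := by
      have h1 : (jb (t • v))⁻¹ ≤ 2 * (1 + ‖t • v‖)⁻¹ := jb_inv_le _
      have h2 : ‖t • v‖ = |t| * ‖v‖ := by rw [norm_smul, Real.norm_eq_abs]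
      have h3 : m * (1 + |t|) ≤ 1 + |t| * ‖v‖ := by
        have h5 := min_le_left (1:ℝ) ‖v‖
        have h6 := mul_le_mul_of_nonneg_right (min_le_right (1:ℝ) ‖v‖) (abs_nonneg t)
        nlinarith
      have h4 : (1 + |t| * ‖v‖)⁻¹ ≤ (m * (1 + |t|))⁻¹ :=
        inv_anti₀ (by positivity) h3
      calc (jb (t • v))⁻¹ ≤ 2 * (1 + |t| * ‖v‖)⁻¹ := by rw [← h2]; exact h1
        _ ≤ 2 * (m * (1 + |t|))⁻¹ := by linarith
        _ = 2 / m * (1 + |t|)⁻¹ := by rw [mul_inv]; ring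
    have hKD : K * (jb (t • v))⁻¹ ≤ K * (2 / m) * (1 + |t|)⁻¹ :=
      calc K * (jb (t • v))⁻¹ ≤ K * (2 / m * (1 + |t|)⁻¹) :=
            mul_le_mul_of_nonneg_left hDD hK0.le
        _ = K * (2 / m) * (1 + |t|)⁻¹ := (mul_assoc _ _ _).symm
    calc ((∫⁻ x : E3, (‖acoef v W₁ W₂ x t‖₊ : ENNReal) ^ ((5:ℝ)/2)) ^ ((2:ℝ)/5)) ^ ((5:ℝ)/4)
        = (∫⁻ x : E3, (‖acoef v W₁ W₂ x t‖₊ : ENNReal) ^ ((5:ℝ)/2)) ^ ((1:ℝ)/2) := by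
          rw [← ENNReal.rpow_mul]; norm_num
      _ ≤ (ENNReal.ofReal ((K * (jb (t • v))⁻¹) ^ ((5:ℝ)/2)) * (I + I)) ^ ((1:ℝ)/2) :=
          ENNReal.rpow_le_rpow (hF t) (by norm_num)
      _ = ENNReal.ofReal ((K * (jb (t • v))⁻¹) ^ ((5:ℝ)/2)) ^ ((1:ℝ)/2)
            * (I + I) ^ ((1:ℝ)/2) :=
          ENNReal.mul_rpow_of_nonneg _ _ (by norm_num)
      _ = ENNReal.ofReal (((K * (jb (t • v))⁻¹) ^ ((5:ℝ)/2)) ^ ((1:ℝ)/2))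
            * (I + I) ^ ((1:ℝ)/2) := by
          rw [ENNReal.ofReal_rpow_of_nonneg
            (Real.rpow_nonneg (mul_nonneg hK0.le (jb_inv_nonneg _)) _) (by norm_num)]
      _ = ENNReal.ofReal ((K * (jb (t • v))⁻¹) ^ ((5:ℝ)/4)) * (I + I) ^ ((1:ℝ)/2) := by
          rw [← Real.rpow_mul (mul_nonneg hK0.le (jb_inv_nonneg _))]; norm_num
      _ ≤ ENNReal.ofReal (R * ((1 + |t|)⁻¹) ^ ((5:ℝ)/4)) * (I + I) ^ ((1:ℝ)/2) := by
          apply mul_le_mul_left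
          apply ENNReal.ofReal_le_ofReal
          calc (K * (jb (t • v))⁻¹) ^ ((5:ℝ)/4)
              ≤ (K * (2 / m) * (1 + |t|)⁻¹) ^ ((5:ℝ)/4) :=
                Real.rpow_le_rpow (mul_nonneg hK0.le (jb_inv_nonneg _)) hKD (by norm_num)
            _ = R * ((1 + |t|)⁻¹) ^ ((5:ℝ)/4) := Real.mul_rpow
                (mul_nonneg hK0.le (div_nonneg (by norm_num) hm0.le))
                (inv_nonneg.2 habs.le)
      _ = S * φ t := by rw [ENNReal.ofReal_mul hR0, hS_def, hφ_def]; ring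
  set μ' : Measure ℝ := volume.withDensity φ with hμ'_def
  have hμ'Ici : ∀ t₀ : ℝ, μ' (Set.Ici t₀) = ∫⁻ t in Set.Ici t₀, φ t :=
    fun t₀ => withDensity_apply φ measurableSet_Ici
  have hμ'fin : μ' Set.univ < ⊤ := by
    rw [hμ'_def, withDensity_apply φ MeasurableSet.univ, Measure.restrict_univ]
    have hint : Integrable (fun t : ℝ => ((1:ℝ) + ‖t‖) ^ (-(5/4 : ℝ))) :=
      integrable_one_add_norm (by simp; norm_num)
    calc (∫⁻ t : ℝ, φ t) = ∫⁻ t : ℝ, ENNReal.ofReal (((1:ℝ) + ‖t‖) ^ (-(5/4:ℝ))) := by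
          apply lintegral_congr
          intro t
          rw [hφ_def]
          congr 1
          rw [Real.norm_eq_abs, Real.rpow_neg (by positivity),
            ← Real.inv_rpow (by positivity)]
      _ < ⊤ := hint.lintegral_lt_top
  have hg_le : ∀ t₀ : ℝ,
      (∫⁻ t in Set.Ici t₀,
          ((∫⁻ x : E3, (‖acoef v W₁ W₂ x t‖₊ : ENNReal) ^ ((5:ℝ)/2)) ^ ((2:ℝ)/5))
            ^ ((5:ℝ)/4))
        ≤ S * μ' (Set.Ici t₀) := by
    intro t₀
    calc _ ≤ ∫⁻ t in Set.Ici t₀, S * φ t := lintegral_mono fun t => hGt t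
      _ = S * ∫⁻ t in Set.Ici t₀, φ t := lintegral_const_mul' S φ hSne
      _ = S * μ' (Set.Ici t₀) := by rw [hμ'Ici]
  have hbound : ∀ t₀ : ℝ, mixedNorm v W₁ W₂ t₀ ≤ (S * μ' (Set.Ici t₀)) ^ ((4:ℝ)/5) := by
    intro t₀
    unfold mixedNorm
    exact ENNReal.rpow_le_rpow (hg_le t₀) (by norm_num)
  have htail : Filter.Tendsto (fun t₀ : ℝ => μ' (Set.Ici t₀)) Filter.atTop (nhds 0) := by
    have hseq : Filter.Tendsto (fun n : ℕ => μ' (Set.Ici ((n:ℝ)))) Filter.atTop (nhds 0) := by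
      have hanti : Antitone (fun n : ℕ => Set.Ici ((n:ℝ))) := fun i j hij =>
        Set.Ici_subset_Ici.2 (by exact_mod_cast hij)
      have h := tendsto_measure_iInter_atTop (μ := μ')
        (fun n : ℕ => measurableSet_Ici.nullMeasurableSet) hanti
        ⟨0, (lt_of_le_of_lt (measure_mono (Set.subset_univ _)) hμ'fin).ne⟩
      have hempty : (⋂ n : ℕ, Set.Ici ((n:ℝ))) = ∅ := by
        apply Set.eq_empty_iff_forall_notMem.2
        intro x hx
        obtain ⟨n, hn⟩ := exists_nat_gt x
        exact absurd (Set.mem_iInter.1 hx n) (not_le.2 hn)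
      rw [hempty, measure_empty] at h
      exact h
    rw [ENNReal.tendsto_nhds_zero]
    intro ε hε
    obtain ⟨n, hn⟩ := (ENNReal.tendsto_nhds_zero.mp hseq ε hε).exists
    filter_upwards [Filter.eventually_ge_atTop ((n:ℝ))] with t₀ ht₀
    exact le_trans (measure_mono (Set.Ici_subset_Ici.2 ht₀)) hn
  constructor
  · refine ⟨0, fun t₀ _ => ?_⟩
    refine lt_of_le_of_lt (hbound t₀) ?_
    apply ENNReal.rpow_lt_top_of_nonneg (by norm_num)
    exact (ENNReal.mul_lt_top hSne.lt_top
      (lt_of_le_of_lt (measure_mono (Set.subset_univ _)) hμ'fin)).ne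
  · have hub : Filter.Tendsto (fun t₀ : ℝ => S * μ' (Set.Ici t₀)) Filter.atTop (nhds 0) := by
      have h := ENNReal.Tendsto.const_mul htail (Or.inr hSne)
      simpa using h
    have hub' : Filter.Tendsto (fun t₀ : ℝ => (S * μ' (Set.Ici t₀)) ^ ((4:ℝ)/5))
        Filter.atTop (nhds 0) := by
      have hcont := (ENNReal.continuous_rpow_const (y := (4:ℝ)/5)).tendsto 0
      have h2 := hcont.comp hub
      simpa [ENNReal.zero_rpow_of_pos (by norm_num : (0:ℝ) < 4/5), Function.comp_def] using h2
    exact tendsto_of_tendsto_of_tendsto_of_le_of_le tendsto_const_nhds hub'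
      (fun t₀ => zero_le) (fun t₀ => hbound t₀)

end
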